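/- arXiv:1204.5160 — 4 statements merged into one kernel-verified Lean document; each statement's English description precedes it below -/
import Mathlib

section
/- For every unimodular complex number a, the matrix H₄(a) with rows (1,1,1,1), (1,-1,a,-a), (1,1,-1,-1), (1,-1,-a,a) is a complex Hadamard matrix of order 4. -/
open Complex Matrix BigOperators

/-- A complex Hadamard matrix: unimodular entries and `H * Hᴴ = n • 1`. -/
def IsCHadamard {n : ℕ} (H : Matrix (Fin n) (Fin n) ℂ) : Prop :=
  (∀ i j, ‖H i j‖ = 1) ∧ H * H.conjTranspose = (n : ℂ) • 1

/-- A permutation matrix. -/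
def IsPermMatrix {n : ℕ} (P : Matrix (Fin n) (Fin n) ℂ) : Prop :=
  ∃ σ : Equiv.Perm (Fin n), ∀ i j, P i j = if σ j = i then 1 else 0

/-- A diagonal matrix with unimodular diagonal entries. -/
def IsUnitaryDiag {n : ℕ} (D : Matrix (Fin n) (Fin n) ℂ) : Prop :=
  D.IsDiag ∧ ∀ i, ‖D i i‖ = 1

/-- Equivalence of complex Hadamard matrices. -/
def HadEquiv {n : ℕ} (H K : Matrix (Fin n) (Fin n) ℂ) : Prop :=
  ∃ P₁ P₂ D₁ D₂ : Matrix (Fin n) (Fin n) ℂ,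
    IsPermMatrix P₁ ∧ IsPermMatrix P₂ ∧ IsUnitaryDiag D₁ ∧ IsUnitaryDiag D₂ ∧
    P₁ * D₁ * H * D₂ * P₂ = K

/-- The Haagerup set of a matrix. -/
def HaagerupSet {n : ℕ} (H : Matrix (Fin n) (Fin n) ℂ) : Set ℂ :=
  {z | ∃ i j k l : Fin n,
    z = H i j * H k l * starRingEnd ℂ (H i l) * starRingEnd ℂ (H k j)}

def H4 (a : ℂ) : Matrix (Fin 4) (Fin 4) ℂ :=
  !![1, 1, 1, 1;
     1, -1, a, -a;
     1, 1, -1, -1;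
     1, -1, -a, a]

theorem H4_isCHadamard (a : ℂ) (ha : ‖a‖ = 1) :
    IsCHadamard (H4 a) := by
  have hsa : a * starRingEnd ℂ a = 1 := by
    rw [Complex.mul_conj, ← Complex.sq_norm, ha]; norm_num
  constructor
  · intro i j
    fin_cases i <;> fin_cases j <;> simp [H4, Matrix.vecHead, Matrix.vecTail, ha]
  · ext i j
    fin_cases i <;> fin_cases j <;>
      simp [H4, Matrix.mul_apply, Fin.sum_univ_succ, Matrix.one_apply] <;> ring_nf <;>
      simp [hsa] <;> ring_nf
end

section
/- The matrices H₄(1) and H₄(i) are inequivalent complex Hadamard matrices of order 4. -/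
open Complex Matrix BigOperators

lemma perm_mul_apply {n : ℕ} {P M : Matrix (Fin n) (Fin n) ℂ} {σ : Equiv.Perm (Fin n)}
    (hP : ∀ i j, P i j = if σ j = i then 1 else 0) (i j : Fin n) :
    (P * M) i j = M (σ.symm i) j := by
  rw [Matrix.mul_apply]
  have h1 : (∑ m, P i m * M m j) = P i (σ.symm i) * M (σ.symm i) j := by
    apply Finset.sum_eq_single (σ.symm i)
    · intro m _ hm
      rw [hP, if_neg, zero_mul]
      intro hc
      exact hm (by rw [Equiv.eq_symm_apply]; exact hc)
    · simp
  rw [h1, hP]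
  simp

lemma mul_perm_apply {n : ℕ} {P M : Matrix (Fin n) (Fin n) ℂ} {σ : Equiv.Perm (Fin n)}
    (hP : ∀ i j, P i j = if σ j = i then 1 else 0) (i j : Fin n) :
    (M * P) i j = M i (σ j) := by
  rw [Matrix.mul_apply]
  have h1 : (∑ m, M i m * P m j) = M i (σ j) * P (σ j) j := by
    apply Finset.sum_eq_single (σ j)
    · intro m _ hm
      rw [hP, if_neg (fun hc => hm hc.symm), mul_zero]
    · simp
  rw [h1, hP]
  simp

lemma diag_mul_apply {n : ℕ} {D M : Matrix (Fin n) (Fin n) ℂ} (hD : D.IsDiag) (i j : Fin n) :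
    (D * M) i j = D i i * M i j := by
  rw [Matrix.mul_apply]
  apply Finset.sum_eq_single i
  · intro m _ hm
    rw [hD (Ne.symm hm), zero_mul]
  · simp

lemma mul_diag_apply {n : ℕ} {D M : Matrix (Fin n) (Fin n) ℂ} (hD : D.IsDiag) (i j : Fin n) :
    (M * D) i j = M i j * D j j := by
  rw [Matrix.mul_apply]
  apply Finset.sum_eq_single j
  · intro m _ hm
    rw [hD hm, mul_zero]
  · simp

lemma haag_subset {n : ℕ} {H K : Matrix (Fin n) (Fin n) ℂ} (h : HadEquiv H K) :
    HaagerupSet K ⊆ HaagerupSet H := by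
  obtain ⟨P₁, P₂, D₁, D₂, ⟨σ, hσ⟩, ⟨τ, hτ⟩, ⟨hd1, hu1⟩, ⟨hd2, hu2⟩, hK⟩ := h
  have entry : ∀ i j, K i j =
      D₁ (σ.symm i) (σ.symm i) * H (σ.symm i) (τ j) * D₂ (τ j) (τ j) := by
    intro i j
    rw [← hK, mul_perm_apply hτ, mul_diag_apply hd2,
      show P₁ * D₁ * H = P₁ * (D₁ * H) by rw [mul_assoc],
      perm_mul_apply hσ, diag_mul_apply hd1]
  have unit : ∀ (D : Matrix (Fin n) (Fin n) ℂ) (hu : ∀ i, ‖D i i‖ = 1) (i : Fin n),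
      D i i * starRingEnd ℂ (D i i) = 1 := by
    intro D hu i
    rw [Complex.mul_conj, ← Complex.sq_norm, hu i]
    norm_num
  rintro z ⟨i, j, k, l, rfl⟩
  refine ⟨σ.symm i, τ j, σ.symm k, τ l, ?_⟩
  simp only [entry, _root_.map_mul]
  calc D₁ (σ.symm i) (σ.symm i) * H (σ.symm i) (τ j) * D₂ (τ j) (τ j) *
        (D₁ (σ.symm k) (σ.symm k) * H (σ.symm k) (τ l) * D₂ (τ l) (τ l)) *
        (starRingEnd ℂ (D₁ (σ.symm i) (σ.symm i)) * starRingEnd ℂ (H (σ.symm i) (τ l)) *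
          starRingEnd ℂ (D₂ (τ l) (τ l))) *
        (starRingEnd ℂ (D₁ (σ.symm k) (σ.symm k)) * starRingEnd ℂ (H (σ.symm k) (τ j)) *
          starRingEnd ℂ (D₂ (τ j) (τ j)))
      = (D₁ (σ.symm i) (σ.symm i) * starRingEnd ℂ (D₁ (σ.symm i) (σ.symm i))) *
        (D₁ (σ.symm k) (σ.symm k) * starRingEnd ℂ (D₁ (σ.symm k) (σ.symm k))) *
        (D₂ (τ j) (τ j) * starRingEnd ℂ (D₂ (τ j) (τ j))) *
        (D₂ (τ l) (τ l) * starRingEnd ℂ (D₂ (τ l) (τ l))) *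
        (H (σ.symm i) (τ j) * H (σ.symm k) (τ l) * starRingEnd ℂ (H (σ.symm i) (τ l)) *
          starRingEnd ℂ (H (σ.symm k) (τ j))) := by ring
    _ = H (σ.symm i) (τ j) * H (σ.symm k) (τ l) * starRingEnd ℂ (H (σ.symm i) (τ l)) *
          starRingEnd ℂ (H (σ.symm k) (τ j)) := by
        rw [unit D₁ hu1, unit D₁ hu1, unit D₂ hu2, unit D₂ hu2]; ring

theorem H4_one_I_inequivalent :
    IsCHadamard (H4 1) ∧ IsCHadamard (H4 Complex.I) ∧
    ¬ HadEquiv (H4 1) (H4 Complex.I) := by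
  refine ⟨⟨?_, ?_⟩, ⟨?_, ?_⟩, ?_⟩
  · intro i j
    fin_cases i <;> fin_cases j <;> norm_num [H4, Matrix.vecHead, Matrix.vecTail]
  · ext i j
    fin_cases i <;> fin_cases j <;>
      simp [H4, Matrix.mul_apply, Fin.sum_univ_four, Matrix.conjTranspose_apply,
        Matrix.one_apply, Matrix.smul_apply] <;> ring
  · intro i j
    fin_cases i <;> fin_cases j <;> norm_num [H4, Matrix.vecHead, Matrix.vecTail]
  · ext i j
    fin_cases i <;> fin_cases j <;>
      simp [H4, Matrix.mul_apply, Fin.sum_univ_four, Matrix.conjTranspose_apply,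
        Matrix.one_apply, Matrix.smul_apply, Complex.conj_I] <;> ring
  · intro h
    have hmem : Complex.I ∈ HaagerupSet (H4 Complex.I) := by
      refine ⟨1, 2, 0, 0, ?_⟩
      simp [H4]
    have hmem' := haag_subset h hmem
    obtain ⟨i, j, k, l, hz⟩ := hmem'
    have hreal : ∀ i j, starRingEnd ℂ ((H4 1) i j) = (H4 1) i j := by
      intro i j
      fin_cases i <;> fin_cases j <;> norm_num [H4, Matrix.vecHead, Matrix.vecTail]
    have h2 := congrArg (starRingEnd ℂ) hz
    simp only [_root_.map_mul, Complex.conj_conj, hreal, Complex.conj_I] at h2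
    simp only [hreal] at hz
    rw [← hz] at h2
    have : (2 : ℂ) * Complex.I = 0 := by linear_combination -h2
    simp [Complex.I_ne_zero] at this
end

section
/- The Haagerup set Λ(H) := {h_{ij} h_{kl} · conj(h_{il}) · conj(h_{kj}) : i,j,k,l ∈ {1,…,n}} is invariant under equivalence of complex Hadamard matrices: if H ~ K then Λ(H) = Λ(K). -/
open Complex Matrix BigOperators

lemma unimod_mul_conj (d : ℂ) (hd : ‖d‖ = 1) :
    d * starRingEnd ℂ d = 1 := by
  rw [Complex.mul_conj, Complex.normSq_eq_norm_sq, hd]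
  norm_num

lemma cancel_aux (a b c d x1 x2 x3 x4 : ℂ)
    (ha : a * starRingEnd ℂ a = 1) (hb : b * starRingEnd ℂ b = 1)
    (hc : c * starRingEnd ℂ c = 1) (hd : d * starRingEnd ℂ d = 1) :
    (a * x1 * b) * (c * x2 * d) * starRingEnd ℂ (a * x3 * d)
      * starRingEnd ℂ (c * x4 * b)
    = x1 * x2 * starRingEnd ℂ x3 * starRingEnd ℂ x4 := by
  simp only [_root_.map_mul]
  calc (a * x1 * b) * (c * x2 * d) *
        (starRingEnd ℂ a * starRingEnd ℂ x3 * starRingEnd ℂ d) *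
        (starRingEnd ℂ c * starRingEnd ℂ x4 * starRingEnd ℂ b)
      = (a * starRingEnd ℂ a) * (b * starRingEnd ℂ b) * (c * starRingEnd ℂ c)
        * (d * starRingEnd ℂ d)
        * (x1 * x2 * starRingEnd ℂ x3 * starRingEnd ℂ x4) := by ring
    _ = x1 * x2 * starRingEnd ℂ x3 * starRingEnd ℂ x4 := by
        rw [ha, hb, hc, hd]; ring

theorem haagerup_invariant {n : ℕ} (H K : Matrix (Fin n) (Fin n) ℂ)
    (hH : IsCHadamard H) (hK : IsCHadamard K) (h : HadEquiv H K) :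
    HaagerupSet H = HaagerupSet K := by
  obtain ⟨P₁, P₂, D₁, D₂, ⟨σ₁, hP₁⟩, ⟨σ₂, hP₂⟩, ⟨hD₁diag, hD₁⟩, ⟨hD₂diag, hD₂⟩, hKeq⟩ := h
  have key : ∀ i j, K i j
      = D₁ (σ₁.symm i) (σ₁.symm i) * H (σ₁.symm i) (σ₂ j) * D₂ (σ₂ j) (σ₂ j) := by
    intro i j
    rw [← hKeq]
    have h1 : ∀ (M : Matrix (Fin n) (Fin n) ℂ) i j, (P₁ * M) i j = M (σ₁.symm i) j := by
      intro M i j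
      rw [Matrix.mul_apply]
      rw [Finset.sum_eq_single (σ₁.symm i)]
      · simp [hP₁]
      · intro b _ hb
        rw [hP₁]
        rw [if_neg, zero_mul]
        intro hcontra
        exact hb (by simpa using congrArg σ₁.symm hcontra)
      · simp
    have h2 : ∀ (M : Matrix (Fin n) (Fin n) ℂ) i j, (M * P₂) i j = M i (σ₂ j) := by
      intro M i j
      rw [Matrix.mul_apply]
      rw [Finset.sum_eq_single (σ₂ j)]
      · simp [hP₂]
      · intro b _ hb
        rw [hP₂, if_neg (fun hc => hb hc.symm), mul_zero]
      · simp
    have hD1mul : ∀ (M : Matrix (Fin n) (Fin n) ℂ) i j, (D₁ * M) i j = D₁ i i * M i j := by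
      intro M i j
      rw [Matrix.mul_apply, Finset.sum_eq_single i]
      · intro b _ hb
        rw [hD₁diag (Ne.symm hb), zero_mul]
      · simp
    have hD2mul : ∀ (M : Matrix (Fin n) (Fin n) ℂ) i j, (M * D₂) i j = M i j * D₂ j j := by
      intro M i j
      rw [Matrix.mul_apply, Finset.sum_eq_single j]
      · intro b _ hb
        rw [hD₂diag hb, mul_zero]
      · simp
    calc (P₁ * D₁ * H * D₂ * P₂) i j
        = (P₁ * (D₁ * H * D₂)) i (σ₂ j) := by
          rw [h2]; simp only [Matrix.mul_assoc]
      _ = (D₁ * H * D₂) (σ₁.symm i) (σ₂ j) := h1 _ _ _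
      _ = D₁ (σ₁.symm i) (σ₁.symm i) * H (σ₁.symm i) (σ₂ j) * D₂ (σ₂ j) (σ₂ j) := by
          rw [hD2mul, hD1mul]
  ext z
  simp only [HaagerupSet, Set.mem_setOf_eq]
  constructor
  · rintro ⟨i, j, k, l, rfl⟩
    refine ⟨σ₁ i, σ₂.symm j, σ₁ k, σ₂.symm l, ?_⟩
    rw [key, key, key, key]
    simp only [Equiv.symm_apply_apply, Equiv.apply_symm_apply]
    exact (cancel_aux _ _ _ _ _ _ _ _
      (unimod_mul_conj _ (hD₁ _)) (unimod_mul_conj _ (hD₂ _))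
      (unimod_mul_conj _ (hD₁ _)) (unimod_mul_conj _ (hD₂ _))).symm
  · rintro ⟨i, j, k, l, rfl⟩
    refine ⟨σ₁.symm i, σ₂ j, σ₁.symm k, σ₂ l, ?_⟩
    rw [key, key, key, key]
    exact (cancel_aux _ _ _ _ _ _ _ _
      (unimod_mul_conj _ (hD₁ _)) (unimod_mul_conj _ (hD₂ _))
      (unimod_mul_conj _ (hD₁ _)) (unimod_mul_conj _ (hD₂ _)))
end

section
/- For every unimodular complex number c, the matrix D₆(c) with rows (1,1,1,1,1,1), (1,-1,i,-ic,-i,ic), (1,i,-1,ic,-i,-ic), (1,-i·conj(c), i·conj(c), -1, i, -i), (1,-i,-i,i,-1,i), (1, i·conj(c), -i·conj(c), -i, i, -1) is a complex Hadamard matrix of order 6. -/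
open Complex Matrix BigOperators

def D6 (c : ℂ) : Matrix (Fin 6) (Fin 6) ℂ :=
  !![1, 1, 1, 1, 1, 1;
     1, -1, Complex.I, -Complex.I * c, -Complex.I, Complex.I * c;
     1, Complex.I, -1, Complex.I * c, -Complex.I, -Complex.I * c;
     1, -Complex.I * starRingEnd ℂ c, Complex.I * starRingEnd ℂ c, -1, Complex.I, -Complex.I;
     1, -Complex.I, -Complex.I, Complex.I, -1, Complex.I;
     1, Complex.I * starRingEnd ℂ c, -Complex.I * starRingEnd ℂ c, -Complex.I, Complex.I, -1]

@[simp] lemma cons_val_five {m : ℕ} {α : Type*} (x : α) (u : Fin (m+5) → α) :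
    Matrix.vecCons x u 5 = Matrix.vecHead (Matrix.vecTail (Matrix.vecTail (Matrix.vecTail (Matrix.vecTail u)))) :=
  rfl

set_option maxHeartbeats 2000000 in
theorem D6_isCHadamard (c : ℂ) (hc : ‖c‖ = 1) :
    IsCHadamard (D6 c) := by
  have hc' : c * starRingEnd ℂ c = 1 := by
    rw [Complex.mul_conj]
    norm_cast
    rw [Complex.normSq_eq_norm_sq, hc]
    norm_num
  have habs : ‖starRingEnd ℂ c‖ = 1 := by simp [hc]
  constructor
  · intro i j
    fin_cases i <;> fin_cases j <;>
      simp [D6, Matrix.vecHead, Matrix.vecTail, _root_.map_mul, hc, habs]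
  · have hre : c.re ^ 2 + c.im ^ 2 = 1 := by
      have := Complex.sq_norm c
      rw [hc, Complex.normSq_apply] at this
      nlinarith [this]
    ext i j
    fin_cases i <;> fin_cases j <;>
      simp [D6, Matrix.mul_apply, Fin.sum_univ_six, Matrix.conjTranspose_apply,
        Matrix.vecHead, Matrix.vecTail, Matrix.one_apply, Complex.ext_iff] <;>
      ring_nf <;>
      exact ⟨by nlinarith [hre], trivial⟩
end
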